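/- Let Z be a real symmetric positive definite n×n matrix and P a real symmetric positive semidefinite n×n matrix such that Z⁻¹ − P is positive semidefinite. Then every eigenvalue λ ∈ ℂ of the matrix Z·P (regarded as a complex matrix via the entrywise embedding ℝ → ℂ) satisfies |λ| ≤ 1. -/

import Mathlib

open Matrix
open scoped ComplexOrder

private lemma map_mul' {n : ℕ} (M N : Matrix (Fin n) (Fin n) ℝ) :
    (M * N).map Complex.ofReal = M.map Complex.ofReal * N.map Complex.ofReal := by
  ext i j
  simp [Matrix.mul_apply, Matrix.map_apply]

private lemma psd_map {n : ℕ} {M : Matrix (Fin n) (Fin n) ℝ} (hM : M.PosSemidef) :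
    (M.map Complex.ofReal).PosSemidef := by
  obtain ⟨m, v, rfl⟩ := Matrix.posSemidef_iff_eq_sum_vecMulVec.mp hM
  refine Matrix.posSemidef_iff_eq_sum_vecMulVec.mpr ⟨m, fun i j => (v i j : ℂ), ?_⟩
  ext a b
  simp [vecMulVec_apply, Matrix.sum_apply]

/-- If `Z` is symmetric positive definite, `P` symmetric positive semidefinite
and `Z⁻¹ − P` is positive semidefinite, then every complex eigenvalue of `Z·P` has
modulus at most 1. -/
theorem stmt_5 {n : ℕ} (Z P : Matrix (Fin n) (Fin n) ℝ)
    (hZ : Z.PosDef) (hP : P.PosSemidef)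
    (hZP : (Z⁻¹ - P).PosSemidef) :
    ∀ lam : ℂ, lam ∈ spectrum ℂ ((Z * P).map (Complex.ofReal)) →
      ‖lam‖ ≤ 1 := by
  intro lam hlam
  set A : Matrix (Fin n) (Fin n) ℂ := Z.map Complex.ofReal with hAdef
  set B : Matrix (Fin n) (Fin n) ℂ := P.map Complex.ofReal with hBdef
  set Ai : Matrix (Fin n) (Fin n) ℂ := (Z⁻¹).map Complex.ofReal with hAidef
  -- basic facts
  have hdetZ : IsUnit Z.det := hZ.det_pos.ne'.isUnit
  have hAiA : Ai * A = 1 := by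
    rw [hAidef, hAdef, ← map_mul', Z.nonsing_inv_mul hdetZ]
    ext i j
    simp [Matrix.one_apply, apply_ite]
  have hApsd : A.PosSemidef := psd_map hZ.posSemidef
  have hBpsd : B.PosSemidef := psd_map hP
  have hDiffpsd : (Ai - B).PosSemidef := by
    have h := psd_map hZP
    rwa [show (Z⁻¹ - P).map Complex.ofReal = Ai - B by
      ext i j; simp [hAidef, hBdef, Complex.ofReal_sub]] at h
  -- extract an eigenvector
  have hmap : (Z * P).map Complex.ofReal = A * B := by
    rw [hAdef, hBdef, map_mul']
  rw [hmap, spectrum.mem_iff, Matrix.isUnit_iff_isUnit_det] at hlam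
  have hdet0 : ((algebraMap ℂ (Matrix (Fin n) (Fin n) ℂ)) lam - A * B).det = 0 := by
    by_contra h
    exact hlam (isUnit_iff_ne_zero.mpr h)
  obtain ⟨v, hv0, hv⟩ := Matrix.exists_mulVec_eq_zero_iff.mpr hdet0
  have heig : (A * B) *ᵥ v = lam • v := by
    rw [Matrix.sub_mulVec] at hv
    have h2 : ((algebraMap ℂ (Matrix (Fin n) (Fin n) ℂ)) lam) *ᵥ v = lam • v := by
      ext i
      simp [Matrix.algebraMap_eq_diagonal, Matrix.mulVec_diagonal]
    rw [h2] at hv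
    exact (sub_eq_zero.mp hv).symm
  set u : (Fin n) → ℂ := B *ᵥ v with hu
  by_cases hu0 : u = 0
  · have h0 : lam • v = 0 := by
      rw [← heig, ← Matrix.mulVec_mulVec, ← hu, hu0, Matrix.mulVec_zero]
    have hlam0 : lam = 0 := by
      rcases smul_eq_zero.mp h0 with h | h
      · exact h
      · exact absurd h hv0
    simp [hlam0]
  · set s : ℂ := star v ⬝ᵥ u with hs
    have hs_nonneg : 0 ≤ s := hBpsd.dotProduct_mulVec_nonneg v
    have hs_ne : s ≠ 0 := fun h => hu0 ((hBpsd.dotProduct_mulVec_zero_iff v).mp h)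
    have hAu : A *ᵥ u = lam • v := by rw [hu, Matrix.mulVec_mulVec, heig]
    set q : ℂ := star u ⬝ᵥ (A *ᵥ u) with hq
    have hq_nonneg : 0 ≤ q := hApsd.dotProduct_mulVec_nonneg u
    have hq_ne : q ≠ 0 := by
      intro h
      have h2 : A *ᵥ u = 0 := (hApsd.dotProduct_mulVec_zero_iff u).mp h
      apply hu0
      have h3 : Ai *ᵥ (A *ᵥ u) = u := by
        rw [Matrix.mulVec_mulVec, hAiA, Matrix.one_mulVec]
      rw [h2, Matrix.mulVec_zero] at h3
      exact h3.symm
    -- s and q are positive reals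
    have hs_re : s = Complex.ofReal s.re ∧ 0 < s.re := by
      obtain ⟨h1, h2⟩ := Complex.nonneg_iff.mp hs_nonneg
      refine ⟨Complex.ext (by simp) (by simp [← h2]), ?_⟩
      rcases lt_or_eq_of_le h1 with h | h
      · exact h
      · exact absurd (Complex.ext (by simp [← h]) (by simp [← h2])) hs_ne
    have hq_re : q = Complex.ofReal q.re ∧ 0 < q.re := by
      obtain ⟨h1, h2⟩ := Complex.nonneg_iff.mp hq_nonneg
      refine ⟨Complex.ext (by simp) (by simp [← h2]), ?_⟩
      rcases lt_or_eq_of_le h1 with h | h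
      · exact h
      · exact absurd (Complex.ext (by simp [← h]) (by simp [← h2])) hq_ne
    -- q = lam * s
    have hqs : q = lam * s := by
      have h1 : star u ⬝ᵥ v = star s := by
        rw [hs]; exact Matrix.star_dotProduct u v
      have hss : star s = s := by
        nth_rewrite 1 [hs_re.1]
        simp only [Complex.star_def, Complex.conj_ofReal]
        exact hs_re.1.symm
      calc q = star u ⬝ᵥ (lam • v) := by rw [hq, hAu]
        _ = lam * (star u ⬝ᵥ v) := dotProduct_smul lam (star u) v
        _ = lam * s := by rw [h1, hss]
    -- lam is a nonneg real r
    set r : ℝ := q.re / s.re with hr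
    have hlamr : lam = Complex.ofReal r := by
      have : lam = q / s := by
        rw [hqs, mul_div_cancel_right₀ _ hs_ne]
      rw [this, hq_re.1, hs_re.1, hr]
      push_cast
      ring
    have hr_pos : 0 < r := div_pos hq_re.2 hs_re.2
    -- final inequality from (Ai - B) psd at x = lam • v
    have hkey : 0 ≤ star (lam • v) ⬝ᵥ ((Ai - B) *ᵥ (lam • v)) := hDiffpsd.dotProduct_mulVec_nonneg _
    have hAix : Ai *ᵥ (lam • v) = u := by
      rw [← hAu, Matrix.mulVec_mulVec, hAiA, Matrix.one_mulVec]
    have hBx : B *ᵥ (lam • v) = lam • u := by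
      rw [Matrix.mulVec_smul, hu]
    have hcomp : star (lam • v) ⬝ᵥ ((Ai - B) *ᵥ (lam • v))
        = Complex.ofReal ((r - r * r) * s.re) := by
      rw [Matrix.sub_mulVec, hAix, hBx, dotProduct_sub]
      have hstar : star (lam • v) = (starRingEnd ℂ lam) • star v := by
        ext i; simp [mul_comm]
      rw [hstar, smul_dotProduct, smul_dotProduct,
        dotProduct_smul, ← hs, hlamr]
      rw [hs_re.1]
      simp only [Complex.conj_ofReal, smul_eq_mul, Complex.ofReal_re]
      push_cast
      ring
    rw [hcomp] at hkey
    have hineq : 0 ≤ (r - r * r) * s.re := by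
      have := (Complex.nonneg_iff.mp hkey).1
      simpa using this
    have hr_le : r ≤ 1 := by
      have h1 : 0 ≤ r - r * r := by
        by_contra h
        push_neg at h
        nlinarith [hs_re.2]
      nlinarith
    rw [hlamr]
    rw [Complex.norm_real, Real.norm_of_nonneg hr_pos.le]
    exact hr_le
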